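/- For integers a ≥ 0, b ≥ 0 with a+b > 0, the derivation δ_{2a} of the free Lie algebra L(T,A) satisfies 2·δ_{2a}(ad_T^{2b}(A)) = h_{a,b}(x,y)∘(A,A), where for a polynomial f(x,y) = Σ c_{rs} x^r y^s one defines f(x,y)∘(A,A) = Σ c_{rs}[ad_T^r(A), ad_T^s(A)], and h_{a,b}(x,y) = x^{2a-1}y^{2b} - x^{2b}y^{2a-1} + xy(x+y)^{2b-1}(y^{2a-2} - x^{2a-2}) (interpreted via its polynomial factored form). -/

import Mathlib

open scoped BigOperators

noncomputable section

namespace Stmt16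

abbrev L := FreeLieAlgebra ℚ (Fin 2)

def T : L := FreeLieAlgebra.of ℚ 0

def A : L := FreeLieAlgebra.of ℚ 1

def ad : Module.End ℚ L := LieAlgebra.ad ℚ L T

/-- The Levin–Racinet pairing `f(x,y) ∘ (A,A)`: the linear extension of
`x^r y^s ↦ [ad_T^r(A), ad_T^s(A)]`. -/
def pairing (p : MvPolynomial (Fin 2) ℚ) : L :=
  ∑ m ∈ p.support, MvPolynomial.coeff m p • ⁅(ad ^ (m 0)) A, (ad ^ (m 1)) A⁆

def X : MvPolynomial (Fin 2) ℚ := MvPolynomial.X 0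

def Y : MvPolynomial (Fin 2) ℚ := MvPolynomial.X 1

open MvPolynomial Finset

abbrev R2 := MvPolynomial (Fin 2) ℚ
def v (r s : ℕ) : L := ⁅(ad ^ r) A, (ad ^ s) A⁆

lemma pairing_def (p : R2) : pairing p = ∑ m ∈ p.support, coeff m p • v (m 0) (m 1) := rfl

lemma pairing_eq_sum_subset (p : R2) {s : Finset (Fin 2 →₀ ℕ)} (hs : p.support ⊆ s) :
    pairing p = ∑ m ∈ s, coeff m p • v (m 0) (m 1) := by
  rw [pairing_def]
  exact Finset.sum_subset hs (fun m _ hm => by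
    rw [MvPolynomial.notMem_support_iff.mp hm, zero_smul])

lemma pairing_add (p q : R2) : pairing (p + q) = pairing p + pairing q := by
  classical
  rw [pairing_eq_sum_subset (p+q) (MvPolynomial.support_add),
      pairing_eq_sum_subset p (Finset.subset_union_left),
      pairing_eq_sum_subset q (Finset.subset_union_right), ← Finset.sum_add_distrib]
  simp [MvPolynomial.coeff_add, add_smul]

lemma pairing_smul (c : ℚ) (p : R2) : pairing (c • p) = c • pairing p := by
  rw [pairing_eq_sum_subset (c • p) MvPolynomial.support_smul, pairing_def, Finset.smul_sum]
  simp [MvPolynomial.coeff_smul, smul_smul]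

def pairingL : R2 →ₗ[ℚ] L :=
  { toFun := pairing, map_add' := pairing_add, map_smul' := pairing_smul }

lemma pairing_eq (p : R2) : pairing p = pairingL p := rfl

lemma pairing_sum {ι : Type*} (s : Finset ι) (f : ι → R2) :
    pairing (∑ i ∈ s, f i) = ∑ i ∈ s, pairing (f i) := by
  rw [pairing_eq, map_sum]; rfl

lemma pairing_sub (p q : R2) : pairing (p - q) = pairing p - pairing q := by
  rw [pairing_eq, pairing_eq, pairing_eq, map_sub]

lemma pairing_monomial (m : Fin 2 →₀ ℕ) (c : ℚ) :
    pairing (monomial m c) = c • v (m 0) (m 1) := by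
  rcases eq_or_ne c 0 with rfl | hc
  · simp [pairing_def]
  · rw [pairing_def, MvPolynomial.support_monomial, if_neg hc, Finset.sum_singleton,
      MvPolynomial.coeff_monomial, if_pos rfl]

lemma XY_monomial (r s : ℕ) :
    (X ^ r * Y ^ s : R2) = monomial (Finsupp.single 0 r + Finsupp.single 1 s) 1 := by
  rw [X, Y, X_pow_eq_monomial, X_pow_eq_monomial, monomial_mul, one_mul]

lemma pairing_XY (r s : ℕ) : pairing (X ^ r * Y ^ s) = v r s := by
  rw [XY_monomial, pairing_monomial]
  simp [Finsupp.single_apply]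

def sw : R2 →ₐ[ℚ] R2 := rename (Equiv.swap 0 1)

lemma sw_X : sw X = Y := by simp [sw, X, Y]
lemma sw_Y : sw Y = X := by simp [sw, X, Y]

lemma pairing_sw (p : R2) : pairing (sw p) = - pairing p := by
  induction p using MvPolynomial.induction_on' with
  | monomial m c =>
    rw [sw, rename_monomial, pairing_monomial, pairing_monomial,
      Finsupp.mapDomain_equiv_apply, Finsupp.mapDomain_equiv_apply]
    simp only [Equiv.symm_swap, Equiv.swap_apply_left, Equiv.swap_apply_right]
    rw [v, v, ← lie_skew, smul_neg]
  | add p q hp hq => rw [map_add, pairing_add, pairing_add, hp, hq, neg_add]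

lemma ad_pow_succ_A (r : ℕ) : (ad ^ (r+1)) A = ⁅T, (ad ^ r) A⁆ := by
  rw [pow_succ', Module.End.mul_apply, ad, LieAlgebra.ad_apply]

lemma ad_v (r s : ℕ) : ad (v r s) = v (r+1) s + v r (s+1) := by
  rw [ad, LieAlgebra.ad_apply, v, leibniz_lie, v, v, ad_pow_succ_A, ad_pow_succ_A]

lemma X_eq_monomial : (X : R2) = monomial (Finsupp.single 0 1) 1 := by
  rw [X, ← pow_one (MvPolynomial.X (0:Fin 2)), X_pow_eq_monomial]

lemma Y_eq_monomial : (Y : R2) = monomial (Finsupp.single 1 1) 1 := by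
  rw [Y, ← pow_one (MvPolynomial.X (1:Fin 2)), X_pow_eq_monomial]

lemma ad_pairing (p : R2) : ad (pairing p) = pairing ((X + Y) * p) := by
  induction p using MvPolynomial.induction_on' with
  | monomial m c =>
    rw [pairing_monomial, map_smul, ad_v, add_mul, X_eq_monomial, Y_eq_monomial,
      monomial_mul, monomial_mul, one_mul, pairing_add, pairing_monomial, pairing_monomial]
    have e1 : ((Finsupp.single (0:Fin 2) 1 + m : Fin 2 →₀ ℕ)) 0 = m 0 + 1 := by
      simp [Finsupp.add_apply, Finsupp.single_apply, add_comm]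
    have e2 : ((Finsupp.single (0:Fin 2) 1 + m : Fin 2 →₀ ℕ)) 1 = m 1 := by
      simp [Finsupp.add_apply, Finsupp.single_apply]
    have e3 : ((Finsupp.single (1:Fin 2) 1 + m : Fin 2 →₀ ℕ)) 0 = m 0 := by
      simp [Finsupp.add_apply, Finsupp.single_apply]
    have e4 : ((Finsupp.single (1:Fin 2) 1 + m : Fin 2 →₀ ℕ)) 1 = m 1 + 1 := by
      simp [Finsupp.add_apply, Finsupp.single_apply, add_comm]
    rw [e1, e2, e3, e4, smul_add]
  | add p q hp hq => rw [pairing_add, map_add, hp, hq, mul_add, pairing_add]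

lemma ad_pow_pairing (n : ℕ) (p : R2) : (ad ^ n) (pairing p) = pairing ((X + Y) ^ n * p) := by
  induction n with
  | zero => simp
  | succ n ih =>
    rw [pow_succ', Module.End.mul_apply, ih, ad_pairing, ← mul_assoc, ← pow_succ']

def q (a : ℕ) : R2 :=
  ∑ p ∈ (Finset.HasAntidiagonal.antidiagonal (2*a-1)).filter (fun p => p.2 < p.1),
    ((-1:ℚ)^(p.1+1)) • (X^p.1 * Y^p.2)

def Qp (a : ℕ) : ℕ → R2
  | 0 => q a
  | n+1 => -(X^(2*a) * Y^n) + (X + Y) * Qp a n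

lemma sw_Qp_succ (a n : ℕ) :
    sw (Qp a (n+1)) = -(Y^(2*a) * X^n) + (X + Y) * sw (Qp a n) := by
  rw [Qp, map_add, map_neg, map_mul, map_mul, map_add, map_pow, map_pow, sw_X, sw_Y, add_comm Y X]

lemma closed (a : ℕ)
    (hbase : (X+Y) * (Qp a 0 - sw (Qp a 0)) = X^(2*a) - Y^(2*a)) (n : ℕ) :
    X*Y*(X+Y) * (Qp a n - sw (Qp a n)) =
      -((X+Y) * (Y * X^(2*a) * ((X+Y)^n - Y^n) - X * Y^(2*a) * ((X+Y)^n - X^n)))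
        + X*Y*(X+Y)^n * (X^(2*a) - Y^(2*a)) := by
  induction n with
  | zero =>
    simp only [pow_zero, sub_self, mul_zero, zero_mul, mul_one]
    linear_combination (X*Y) * hbase
  | succ n ih =>
    rw [sw_Qp_succ, Qp, pow_succ (X+Y), pow_succ X, pow_succ Y]
    linear_combination (X+Y) * ih

lemma q_zero : q 0 = 0 := by
  rw [q]
  apply Finset.sum_eq_zero
  intro p hp
  simp only [Finset.mem_filter, Finset.HasAntidiagonal.mem_antidiagonal] at hp
  omega

lemma sign_flip (c : ℕ) {j k : ℕ} (h : j + k = 2*c+1) :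
    ((-1:ℚ)^(k+1)) = -((-1:ℚ)^(j+1)) := by
  rcases Nat.even_or_odd k with hk | hk
  · obtain ⟨m, hm⟩ := hk
    rw [Odd.neg_one_pow ⟨m, by omega⟩, Even.neg_one_pow (⟨c + 1 - m, by omega⟩ : Even (j+1))]
    try norm_num
  · obtain ⟨m, hm⟩ := hk
    rw [Even.neg_one_pow ⟨m+1, by omega⟩, Odd.neg_one_pow ⟨c - m, by omega⟩]
    try norm_num

lemma sw_q (a : ℕ) : sw (q a) =
    ∑ p ∈ (Finset.HasAntidiagonal.antidiagonal (2*a-1)).filter (fun p => p.2 < p.1),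
      ((-1:ℚ)^(p.1+1)) • (Y^p.1 * X^p.2) := by
  rw [q, map_sum]
  exact Finset.sum_congr rfl fun p _ => by
    rw [map_smul, map_mul, map_pow, map_pow, sw_X, sw_Y]

lemma q_sub_sw (c : ℕ) : q (c+1) - sw (q (c+1)) =
    ∑ p ∈ Finset.HasAntidiagonal.antidiagonal (2*(c+1)-1), ((-1:ℚ)^(p.1+1)) • (X^p.1 * Y^p.2) := by
  rw [← Finset.sum_filter_add_sum_filter_not (Finset.HasAntidiagonal.antidiagonal (2*(c+1)-1))
    (fun p => p.2 < p.1), sw_q, q, sub_eq_add_neg]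
  congr 1
  have key : ∑ p ∈ (Finset.HasAntidiagonal.antidiagonal (2*(c+1)-1)).filter (fun p => p.2 < p.1),
      ((-1:ℚ)^(p.1+1)) • (Y^p.1 * X^p.2)
      = ∑ p ∈ (Finset.HasAntidiagonal.antidiagonal (2*(c+1)-1)).filter (fun p => ¬ p.2 < p.1),
      -(((-1:ℚ)^(p.1+1)) • (X^p.1 * Y^p.2)) := by
    refine Finset.sum_nbij' (fun p => Prod.swap p) (fun p => Prod.swap p) ?_ ?_ ?_ ?_ ?_
    · intro p hp
      simp only [Finset.mem_filter, Finset.HasAntidiagonal.mem_antidiagonal, Prod.snd_swap, Prod.fst_swap] at *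
      omega
    · intro p hp
      simp only [Finset.mem_filter, Finset.HasAntidiagonal.mem_antidiagonal, Prod.snd_swap, Prod.fst_swap] at *
      omega
    · intro p _; exact Prod.swap_swap p
    · intro p _; exact Prod.swap_swap p
    · intro p hp
      simp only [Finset.mem_filter, Finset.HasAntidiagonal.mem_antidiagonal] at hp
      have hadd : p.1 + p.2 = 2*c+1 := by omega
      rw [Prod.fst_swap, Prod.snd_swap, sign_flip c hadd, neg_smul, neg_neg, mul_comm]
  rw [key, Finset.sum_neg_distrib, neg_neg]

lemma F_mul (c : ℕ) :
    (X+Y) * (∑ p ∈ Finset.HasAntidiagonal.antidiagonal (2*(c+1)-1), ((-1:ℚ)^(p.1+1)) • (X^p.1 * Y^p.2))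
      = X^(2*(c+1)) - Y^(2*(c+1)) := by
  rw [show 2*(c+1)-1 = 2*c+1 by omega,
    Finset.Nat.sum_antidiagonal_eq_sum_range_succ_mk]
  have hterm : ∀ k ∈ Finset.range (2*c+1+1),
      ((-1:ℚ)^(k+1)) • (X^k * Y^(2*c+1-k)) = -((-X)^k * Y^(2*c+2-1-k)) := by
    intro k hk
    rw [Finset.mem_range] at hk
    rw [show 2*c+2-1-k = 2*c+1-k by omega, smul_eq_C_mul, map_pow, map_neg, map_one, neg_pow]
    ring
  rw [Finset.sum_congr rfl hterm, Finset.sum_neg_distrib]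
  have hg := geom_sum₂_mul (-X) Y (2*c+2)
  have h2 : (2:ℕ)*c+1+1 = 2*c+2 := by omega
  rw [h2]
  calc (X+Y) * -∑ i ∈ Finset.range (2*c+2), (-X)^i * Y^(2*c+2-1-i)
      = (∑ i ∈ Finset.range (2*c+2), (-X)^i * Y^(2*c+2-1-i)) * (-X - Y) := by ring
    _ = (-X)^(2*c+2) - Y^(2*c+2) := hg
    _ = X^(2*(c+1)) - Y^(2*(c+1)) := by
        rw [Even.neg_pow ⟨c+1, by ring⟩, show 2*(c+1) = 2*c+2 by omega]

lemma hbase_pos (c : ℕ) :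
    (X+Y) * (Qp (c+1) 0 - sw (Qp (c+1) 0)) = X^(2*(c+1)) - Y^(2*(c+1)) := by
  rw [show Qp (c+1) 0 = q (c+1) from rfl, q_sub_sw, F_mul]

lemma hbase_zero :
    (X+Y) * (Qp 0 0 - sw (Qp 0 0)) = X^(2*0) - Y^(2*0) := by
  rw [show Qp 0 0 = q 0 from rfl, q_zero]
  simp

lemma Bin (u w : R2) (d : ℕ) :
    ∑ k ∈ Finset.range (2*d+1+1), (((2*d+2).choose (k+1) : ℚ)) • (u^(k+1) * w^(2*d+1-k+1))
      = w*(u+w)^(2*d+2) - w^(2*d+3) := by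
  have hap := add_pow u w (2*d+2)
  have h1 : ∑ k ∈ Finset.range (2*d+1+1), (((2*d+2).choose (k+1) : ℚ)) • (u^(k+1) * w^(2*d+1-k+1))
      = ∑ k ∈ Finset.range (2*d+2), (fun m => u^m * w^(2*d+2-m) * ((2*d+2).choose m : R2) * w) (k+1) := by
    refine Finset.sum_congr (by norm_num) fun k hk => ?_
    rw [Finset.mem_range] at hk
    show _ = u^(k+1) * w^(2*d+2-(k+1)) * (((2*d+2).choose (k+1) : R2)) * w
    rw [smul_eq_C_mul, map_natCast, show 2*d+2-(k+1) = 2*d+1-k by omega,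
      show 2*d+1-k+1 = (2*d+1-k)+1 from rfl, pow_succ]
    ring
  have h3 := Finset.sum_range_succ' (fun m => u^m * w^(2*d+2-m) * ((2*d+2).choose m : R2) * w) (2*d+2)
  rw [h1]
  show ∑ k ∈ Finset.range (2*d+2), u^(k+1) * w^(2*d+2-(k+1)) * (((2*d+2).choose (k+1)) : R2) * w = _
  rw [eq_sub_of_add_eq h3.symm, ← Finset.sum_mul, ← hap]
  have h5 : u^0 * w^(2*d+2-0) * (((2*d+2).choose 0 : ℕ) : R2) * w = w^(2*d+3) := by
    simp [pow_succ]
  rw [h5]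
  ring


/-- The polynomial
`h_{a,b}(x,y) = x^{2a-1}y^{2b} - x^{2b}y^{2a-1} + xy(x+y)^{2b-1}(y^{2a-2} - x^{2a-2})`,
where for `a = 0` or `b = 0` the negative exponents are interpreted via the equivalent
polynomial (factored) form:
`h_{0,b} = -∑_{i+j=2b-1} (C(2b,i+1) - C(2b,j+1)) x^i y^j` and, for `a ≥ 1`,
`h_{a,0} = x^{2a-1} - y^{2a-1} - xy ∑_{i+j=2a-3} (-1)^j x^i y^j`. -/
def h (a b : ℕ) : MvPolynomial (Fin 2) ℚ :=
  if a = 0 then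
    -∑ p ∈ Finset.HasAntidiagonal.antidiagonal (2 * b - 1),
        (((2 * b).choose (p.1 + 1) : ℚ) - ((2 * b).choose (p.2 + 1) : ℚ)) • (X ^ p.1 * Y ^ p.2)
  else if b = 0 then
    if a = 1 then X - Y
    else X ^ (2 * a - 1) - Y ^ (2 * a - 1)
      - X * Y * ∑ p ∈ Finset.HasAntidiagonal.antidiagonal (2 * a - 3), ((-1 : ℚ) ^ p.2) • (X ^ p.1 * Y ^ p.2)
  else
    X ^ (2 * a - 1) * Y ^ (2 * b) - X ^ (2 * b) * Y ^ (2 * a - 1)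
      + X * Y * (X + Y) ^ (2 * b - 1) * (Y ^ (2 * a - 2) - X ^ (2 * a - 2))


lemma hh_pos (c d : ℕ) :
    X*Y*(X+Y) * h (c+1) (d+1) =
      -((X+Y) * (Y * X^(2*(c+1)) * ((X+Y)^(2*(d+1)) - Y^(2*(d+1))) -
          X * Y^(2*(c+1)) * ((X+Y)^(2*(d+1)) - X^(2*(d+1)))))
        + X*Y*(X+Y)^(2*(d+1)) * (X^(2*(c+1)) - Y^(2*(c+1))) := by
  rw [h, if_neg (Nat.succ_ne_zero c), if_neg (Nat.succ_ne_zero d),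
    show 2*(c+1)-1 = 2*c+1 by omega, show 2*(c+1)-2 = 2*c by omega,
    show 2*(c+1) = 2*c+2 by omega, show 2*(d+1)-1 = 2*d+1 by omega,
    show 2*(d+1) = 2*d+2 by omega]
  ring

lemma hh_b0 (c : ℕ) :
    X*Y*(X+Y) * h (c+1) 0 =
      -((X+Y) * (Y * X^(2*(c+1)) * ((X+Y)^(2*0) - Y^(2*0)) -
          X * Y^(2*(c+1)) * ((X+Y)^(2*0) - X^(2*0))))
        + X*Y*(X+Y)^(2*0) * (X^(2*(c+1)) - Y^(2*(c+1))) := by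
  rcases c with _ | e
  · rw [h]; norm_num
    ring
  · rw [h, if_neg (Nat.succ_ne_zero _), if_pos rfl,
      if_neg (by omega : ¬ e + 1 + 1 = 1),
      show 2*(e+2)-1 = 2*e+3 by omega, show 2*(e+2)-3 = 2*e+1 by omega,
      show 2*(e+2) = 2*e+4 by omega, show (2:ℕ)*0 = 0 from rfl]
    have hS : (∑ p ∈ Finset.HasAntidiagonal.antidiagonal (2*e+1), ((-1:ℚ)^p.2) • (X^p.1 * Y^p.2)) * (X+Y)
        = X^(2*e+2) - Y^(2*e+2) := by
      rw [Finset.Nat.sum_antidiagonal_eq_sum_range_succ_mk]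
      have hterm : ∀ k ∈ Finset.range (2*e+1+1),
          ((-1:ℚ)^(2*e+1-k)) • (X^k * Y^(2*e+1-k)) = X^k * (-Y)^(2*e+2-1-k) := by
        intro k hk
        rw [Finset.mem_range] at hk
        rw [show 2*e+2-1-k = 2*e+1-k by omega, smul_eq_C_mul, map_pow, map_neg, map_one, neg_pow]
        ring
      rw [Finset.sum_congr (by norm_num) hterm]
      have hg := geom_sum₂_mul X (-Y) (2*e+2)
      rw [sub_neg_eq_add] at hg
      rw [hg, Even.neg_pow ⟨e+1, by ring⟩]
    linear_combination (-(X*Y*(X*Y))) * hS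

lemma hh_zero (d : ℕ) :
    X*Y*(X+Y) * h 0 (d+1) =
      -((X+Y) * (Y * X^(2*0) * ((X+Y)^(2*(d+1)) - Y^(2*(d+1))) -
          X * Y^(2*0) * ((X+Y)^(2*(d+1)) - X^(2*(d+1)))))
        + X*Y*(X+Y)^(2*(d+1)) * (X^(2*0) - Y^(2*0)) := by
  rw [h, if_pos rfl, show 2*(d+1)-1 = 2*d+1 by omega, show 2*(d+1) = 2*d+2 by omega]
  have hsplit : X*Y*(∑ p ∈ Finset.HasAntidiagonal.antidiagonal (2*d+1),
      (((2*d+2).choose (p.1+1) : ℚ) - ((2*d+2).choose (p.2+1) : ℚ)) • (X^p.1 * Y^p.2))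
      = (∑ p ∈ Finset.HasAntidiagonal.antidiagonal (2*d+1), ((2*d+2).choose (p.1+1) : ℚ) • (X^(p.1+1) * Y^(p.2+1)))
        - (∑ p ∈ Finset.HasAntidiagonal.antidiagonal (2*d+1), ((2*d+2).choose (p.2+1) : ℚ) • (X^(p.1+1) * Y^(p.2+1))) := by
    rw [Finset.mul_sum, ← Finset.sum_sub_distrib]
    refine Finset.sum_congr rfl fun p _ => ?_
    simp only [sub_smul, smul_eq_C_mul, pow_succ]
    ring
  have hs1 : (∑ p ∈ Finset.HasAntidiagonal.antidiagonal (2*d+1), ((2*d+2).choose (p.1+1) : ℚ) • (X^(p.1+1) * Y^(p.2+1)))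
      = Y*(X+Y)^(2*d+2) - Y^(2*d+3) := by
    rw [Finset.Nat.sum_antidiagonal_eq_sum_range_succ_mk, ← Bin X Y d]
  have hs2 : (∑ p ∈ Finset.HasAntidiagonal.antidiagonal (2*d+1), ((2*d+2).choose (p.2+1) : ℚ) • (X^(p.1+1) * Y^(p.2+1)))
      = X*(Y+X)^(2*d+2) - X^(2*d+3) := by
    have hcg : ∀ p ∈ Finset.HasAntidiagonal.antidiagonal (2*d+1),
        ((2*d+2).choose (p.2+1) : ℚ) • (X^(p.1+1) * Y^(p.2+1))
        = (fun p : ℕ × ℕ => ((2*d+2).choose (p.1+1) : ℚ) • (Y^(p.1+1) * X^(p.2+1))) p.swap := by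
      intro p _
      show _ = ((2*d+2).choose (p.swap.1+1) : ℚ) • (Y^(p.swap.1+1) * X^(p.swap.2+1))
      rw [Prod.fst_swap, Prod.snd_swap, mul_comm (Y^(p.2+1)) (X^(p.1+1))]
    calc ∑ p ∈ Finset.HasAntidiagonal.antidiagonal (2*d+1), ((2*d+2).choose (p.2+1) : ℚ) • (X^(p.1+1) * Y^(p.2+1))
        = ∑ p ∈ Finset.HasAntidiagonal.antidiagonal (2*d+1),
            (fun p : ℕ × ℕ => ((2*d+2).choose (p.1+1) : ℚ) • (Y^(p.1+1) * X^(p.2+1))) p.swap :=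
          Finset.sum_congr rfl hcg
      _ = ∑ p ∈ Finset.HasAntidiagonal.antidiagonal (2*d+1), ((2*d+2).choose (p.1+1) : ℚ) • (Y^(p.1+1) * X^(p.2+1)) :=
          Finset.Nat.sum_antidiagonal_swap
            (f := fun p : ℕ × ℕ => ((2*d+2).choose (p.1+1) : ℚ) • (Y^(p.1+1) * X^(p.2+1)))
      _ = X*(Y+X)^(2*d+2) - X^(2*d+3) := by
          rw [Finset.Nat.sum_antidiagonal_eq_sum_range_succ_mk, ← Bin Y X d]
  linear_combination (-(X+Y)) * hsplit + (-(X+Y)) * hs1 + (X+Y) * hs2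

lemma XYXY_ne : (X*Y*(X+Y) : R2) ≠ 0 := by
  intro hcon
  have := congrArg (MvPolynomial.eval (fun i : Fin 2 => (1:ℚ))) hcon
  simp [X, Y] at this

lemma keyQ (a b : ℕ) (hab : 0 < a + b) : Qp a (2*b) - sw (Qp a (2*b)) = h a b := by
  rcases a with _ | c
  · rcases b with _ | d
    · omega
    · exact mul_left_cancel₀ XYXY_ne ((closed 0 hbase_zero (2*(d+1))).trans (hh_zero d).symm)
  · rcases b with _ | d
    · exact mul_left_cancel₀ XYXY_ne ((closed (c+1) (hbase_pos c) (2*0)).trans (hh_b0 c).symm)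
    · exact mul_left_cancel₀ XYXY_ne ((closed (c+1) (hbase_pos c) (2*(d+1))).trans (hh_pos c d).symm)


/-- For `a, b ≥ 0` with `a + b > 0`, the derivation `δ_{2a}` (determined by
`δ_{2a}(T) = -ad_T^{2a}(A)`, `δ_{2a}(A) = ∑_{j>k≥0, j+k=2a-1} (-1)^{j+1}[ad_T^j(A), ad_T^k(A)]`;
for `a = 0` this is `δ₀(T) = -A`, `δ₀(A) = 0`) satisfies
`2 δ_{2a}(ad_T^{2b}(A)) = h_{a,b}(x,y) ∘ (A,A)`. -/
theorem two_delta_eq_pairing (a b : ℕ) (hab : 0 < a + b) (D : LieDerivation ℚ L L)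
    (hT : D T = -((ad ^ (2 * a)) A))
    (hA : D A = ∑ p ∈ (Finset.HasAntidiagonal.antidiagonal (2 * a - 1)).filter (fun p => p.2 < p.1),
        ((-1 : ℚ) ^ (p.1 + 1)) • ⁅(ad ^ p.1) A, (ad ^ p.2) A⁆) :
    (2 : ℚ) • D ((ad ^ (2 * b)) A) = pairing (h a b) := by
  have hDA : D A = pairing (q a) := by
    rw [hA, q, pairing_sum]
    exact Finset.sum_congr rfl fun p _ => by rw [pairing_smul, pairing_XY]; rfl
  have hrec : ∀ n, D ((ad ^ n) A) = pairing (Qp a n) := by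
    intro n
    induction n with
    | zero => simpa [Qp] using hDA
    | succ n ih =>
      rw [ad_pow_succ_A, LieDerivation.apply_lie_eq_add, ih, hT]
      have h1 : ⁅T, pairing (Qp a n)⁆ = pairing ((X+Y) * Qp a n) := by
        have := ad_pairing (Qp a n)
        rw [ad, LieAlgebra.ad_apply] at this
        exact this
      have h2 : ⁅-((ad ^ (2*a)) A), (ad ^ n) A⁆ = -pairing (X^(2*a) * Y^n) := by
        rw [neg_lie, pairing_XY]; rfl
      rw [h1, h2, show Qp a (n+1) = -(X^(2*a) * Y^n) + (X + Y) * Qp a n from rfl,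
        pairing_add]
      rw [pairing_eq (-(X^(2*a) * Y^n)), map_neg, ← pairing_eq]
      abel
  rw [hrec (2*b)]
  calc (2:ℚ) • pairing (Qp a (2*b))
      = pairing (Qp a (2*b)) - pairing (sw (Qp a (2*b))) := by
        rw [pairing_sw, sub_neg_eq_add, two_smul]
    _ = pairing (Qp a (2*b) - sw (Qp a (2*b))) := (pairing_sub _ _).symm
    _ = pairing (h a b) := by rw [keyQ a b hab]

end Stmt16
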